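/- Let Φ be a growth function with Φ(t) > 0 for all t > 0, differentiable on (0,∞), strictly increasing, and assume 1 < a_Φ ≤ b_Φ < ∞. Then there exists a constant C' > 0 such that for every nonincreasing locally integrable function μ : (0,∞) → [0,∞): sup_{t>0} φ_Φ(t)·(1/t)·∫₀^t μ(s) ds ≤ C' · sup_{t>0} φ_Φ(t)·μ(t), where φ_Φ(t) := 1/Φ^{-1}(1/t) for t > 0. -/

import Mathlib

open scoped ENNReal

/-- Let `Φ` be a strictly increasing growth function (continuous,
mapping `[0,∞)` onto itself, with inverse `Φinv`), positive and differentiable on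
`(0,∞)`, with `1 < a_Φ ≤ b_Φ < ∞`.  Then there is `C' > 0` such that for every
nonincreasing locally integrable `μ : (0,∞) → [0,∞)`,
`sup_{t>0} φ_Φ(t)·(1/t)·∫₀ᵗ μ ≤ C' · sup_{t>0} φ_Φ(t)·μ(t)` (suprema in `[0,∞]`),
where `φ_Φ(t) = 1/Φ⁻¹(1/t)`. -/
theorem stmt_16 (Φ Φinv : ℝ → ℝ)
    (hcont : ContinuousOn Φ (Set.Ici 0))
    (hmono : StrictMonoOn Φ (Set.Ici 0))
    (hmaps : Set.MapsTo Φ (Set.Ici 0) (Set.Ici 0))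
    (hinvmaps : Set.MapsTo Φinv (Set.Ici 0) (Set.Ici 0))
    (hleft : ∀ t : ℝ, 0 ≤ t → Φinv (Φ t) = t)
    (hright : ∀ t : ℝ, 0 ≤ t → Φ (Φinv t) = t)
    (hpos : ∀ t : ℝ, 0 < t → 0 < Φ t)
    (hdiff : ∀ t : ℝ, 0 < t → DifferentiableAt ℝ Φ t)
    (ha : 1 < sInf {x : ℝ | ∃ t : ℝ, 0 < t ∧ x = t * deriv Φ t / Φ t})
    (hb : BddAbove {x : ℝ | ∃ t : ℝ, 0 < t ∧ x = t * deriv Φ t / Φ t}) :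
    ∃ C' : ℝ, 0 < C' ∧ ∀ μ : ℝ → ℝ,
      (∀ s : ℝ, 0 < s → 0 ≤ μ s) →
      AntitoneOn μ (Set.Ioi 0) →
      (∀ t : ℝ, 0 < t → IntervalIntegrable μ MeasureTheory.volume 0 t) →
      (⨆ t : {t : ℝ // 0 < t},
          ENNReal.ofReal ((1 / Φinv (1 / (t : ℝ))) *
            ((1 / (t : ℝ)) * ∫ s in (0:ℝ)..(t : ℝ), μ s)))
        ≤ ENNReal.ofReal C' *
          ⨆ t : {t : ℝ // 0 < t},
            ENNReal.ofReal ((1 / Φinv (1 / (t : ℝ))) * μ (t : ℝ)) := by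
  classical
  set S : Set ℝ := {x : ℝ | ∃ t : ℝ, 0 < t ∧ x = t * deriv Φ t / Φ t} with hS
  set a : ℝ := sInf S with haa
  have ha1 : (1:ℝ) < a := ha
  have ha0 : (0:ℝ) < a := lt_trans one_pos ha1
  have hSbdd : BddBelow S := by
    by_contra h
    have h0 : a = 0 := by rw [haa]; exact Real.sInf_of_not_bddBelow h
    linarith
  -- a ≤ r Φ'(r)/Φ(r) for every r > 0
  have hainf : ∀ r : ℝ, 0 < r → a * Φ r ≤ r * deriv Φ r := by
    intro r hr
    have hmem : r * deriv Φ r / Φ r ∈ S := ⟨r, hr, rfl⟩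
    have := csInf_le hSbdd hmem
    have hΦr := hpos r hr
    rw [le_div_iff₀ hΦr] at this
    linarith
  -- Φinv 0 = 0 and Φ 0 = 0
  have hinv0 : Φinv 0 = 0 := by
    by_contra h
    have h0 : 0 < Φinv 0 := lt_of_le_of_ne (hinvmaps (Set.mem_Ici.2 le_rfl)) (Ne.symm h)
    have := hpos _ h0
    rw [hright 0 le_rfl] at this
    exact lt_irrefl 0 this
  have hΦ0 : Φ 0 = 0 := by
    have := hright 0 le_rfl
    rwa [hinv0] at this
  have hinvpos : ∀ u : ℝ, 0 < u → 0 < Φinv u := by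
    intro u hu
    rcases lt_or_eq_of_le (Set.mem_Ici.1 (hinvmaps hu.le)) with h | h
    · exact h
    · exfalso
      have := hright u hu.le
      rw [← h, hΦ0] at this
      linarith
  -- monotonicity of g r = Φ r / r ^ a on (0, ∞)
  have gmono : MonotoneOn (fun r : ℝ => Φ r / r ^ a) (Set.Ioi 0) := by
    have hderiv : ∀ r : ℝ, 0 < r → HasDerivAt (fun r : ℝ => Φ r / r ^ a)
        ((deriv Φ r * r ^ a - Φ r * (a * r ^ (a - 1))) / (r ^ a) ^ 2) r := by
      intro r hr
      exact ((hdiff r hr).hasDerivAt).div (Real.hasDerivAt_rpow_const (Or.inl hr.ne'))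
        (Real.rpow_pos_of_pos hr a).ne'
    apply monotoneOn_of_deriv_nonneg (convex_Ioi 0)
    · intro r hr
      exact ((hderiv r hr).continuousAt).continuousWithinAt
    · intro r hr
      rw [interior_Ioi] at hr
      exact (hderiv r hr).differentiableAt.differentiableWithinAt
    · intro r hr
      rw [interior_Ioi] at hr
      rw [(hderiv r hr).deriv]
      apply div_nonneg _ (sq_nonneg _)
      have h1 : r * r ^ (a - 1) = r ^ a := by
        have h := Real.rpow_add hr 1 (a - 1)
        rw [Real.rpow_one] at h
        rw [← h, show (1:ℝ) + (a - 1) = a by ring]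
      have h2 := hainf r hr
      have h3 : (0:ℝ) ≤ r ^ (a - 1) := (Real.rpow_pos_of_pos hr _).le
      have h4 := mul_le_mul_of_nonneg_right h2 h3
      have h5 : Φ r * (a * r ^ (a - 1)) ≤ deriv Φ r * r ^ a := by
        calc Φ r * (a * r ^ (a - 1)) = (a * Φ r) * r ^ (a - 1) := by ring
        _ ≤ (r * deriv Φ r) * r ^ (a - 1) := h4
        _ = deriv Φ r * (r * r ^ (a - 1)) := by ring
        _ = deriv Φ r * r ^ a := by rw [h1]
      linarith
  -- key: Φ(l x) ≥ l^a Φ(x)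
  have key : ∀ x : ℝ, 0 < x → ∀ l : ℝ, 1 ≤ l → l ^ a * Φ x ≤ Φ (l * x) := by
    intro x hx l hl
    have hlx : 0 < l * x := mul_pos (lt_of_lt_of_le one_pos hl) hx
    have := gmono (Set.mem_Ioi.2 hx) (Set.mem_Ioi.2 hlx)
      (le_mul_of_one_le_left hx.le hl)
    simp only at this
    rw [div_le_div_iff₀ (Real.rpow_pos_of_pos hx a) (Real.rpow_pos_of_pos hlx a)] at this
    rw [Real.mul_rpow (le_of_lt (lt_of_lt_of_le one_pos hl)) hx.le] at this
    have hxa : (0:ℝ) < x ^ a := Real.rpow_pos_of_pos hx a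
    calc l ^ a * Φ x = Φ x * l ^ a := by ring
    _ ≤ Φ (l * x) := by
        rw [← mul_le_mul_iff_of_pos_right hxa]
        calc Φ x * l ^ a * x ^ a = Φ x * (l ^ a * x ^ a) := by ring
        _ ≤ Φ (l * x) * x ^ a := this
  -- inverse bound: Φinv u ≤ (u/v)^(1/a) * Φinv v for 0 < v ≤ u
  have inv_bound : ∀ u v : ℝ, 0 < v → v ≤ u → Φinv u ≤ (u / v) ^ (1/a) * Φinv v := by
    intro u v hv hvu
    have hu : 0 < u := lt_of_lt_of_le hv hvu
    have hx : 0 < Φinv v := hinvpos v hv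
    set l : ℝ := (u / v) ^ (1/a) with hl
    have hdvu : (1:ℝ) ≤ u / v := (one_le_div hv).2 hvu
    have hl1 : (1:ℝ) ≤ l := by
      calc (1:ℝ) = (1:ℝ) ^ (1/a) := (Real.one_rpow _).symm
      _ ≤ l := Real.rpow_le_rpow zero_le_one hdvu (by positivity)
    have hla : l ^ a = u / v := by
      rw [hl, ← Real.rpow_mul (by positivity)]
      rw [one_div, inv_mul_cancel₀ ha0.ne', Real.rpow_one]
    have hkey := key (Φinv v) hx l hl1
    rw [hright v hv.le, hla, div_mul_cancel₀ _ hv.ne'] at hkey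
    have h1 : Φ (Φinv u) ≤ Φ (l * Φinv v) := by rw [hright u hu.le]; exact hkey
    exact (hmono.le_iff_le (hinvmaps hu.le) (by positivity : (0:ℝ) ≤ l * Φinv v)).1 h1
  -- the constant
  set c : ℝ := 1 - 1/a with hc
  have hc0 : 0 < c := by
    rw [hc]
    have : 1/a < 1 := by rw [div_lt_one ha0]; exact ha1
    linarith
  refine ⟨c⁻¹, inv_pos.2 hc0, ?_⟩
  intro μ hμ0 hμanti hμint
  set T : ℝ≥0∞ := ⨆ t : {t : ℝ // 0 < t},
      ENNReal.ofReal ((1 / Φinv (1 / (t : ℝ))) * μ (t : ℝ)) with hT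
  by_cases hTtop : T = ⊤
  · rw [hTtop, ENNReal.mul_top ((ENNReal.ofReal_pos.2 (inv_pos.2 hc0)).ne')]
    exact le_top
  · set M : ℝ := T.toReal with hM
    have hM0 : 0 ≤ M := ENNReal.toReal_nonneg
    have hTM : T = ENNReal.ofReal M := (ENNReal.ofReal_toReal hTtop).symm
    have hμle : ∀ u : ℝ, 0 < u → μ u ≤ M * Φinv (1/u) := by
      intro u hu
      have hle : ENNReal.ofReal ((1 / Φinv (1/u)) * μ u) ≤ T :=
        le_iSup (fun t : {t : ℝ // 0 < t} =>
          ENNReal.ofReal ((1 / Φinv (1 / (t : ℝ))) * μ (t : ℝ))) ⟨u, hu⟩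
      rw [hTM, ENNReal.ofReal_le_ofReal_iff hM0] at hle
      have hX : 0 < Φinv (1/u) := hinvpos _ (by positivity)
      calc μ u = Φinv (1/u) * ((1 / Φinv (1/u)) * μ u) := by field_simp
      _ ≤ Φinv (1/u) * M := by
          exact mul_le_mul_of_nonneg_left hle hX.le
      _ = M * Φinv (1/u) := by ring
    apply iSup_le
    rintro ⟨t, ht⟩
    simp only
    have hXt : 0 < Φinv (1/t) := hinvpos _ (by positivity)
    set K : ℝ := M * Φinv (1/t) * t ^ (1/a) with hK
    have hK0 : 0 ≤ K := by positivity
    -- integrand bound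
    have hrint : IntervalIntegrable (fun s : ℝ => K * s ^ (-(1/a))) MeasureTheory.volume 0 t :=
      (intervalIntegral.intervalIntegrable_rpow' (by linarith [div_lt_one ha0 |>.2 ha1] :
        (-1:ℝ) < -(1/a))).const_mul K
    have hboundae : ∀ᵐ s ∂(MeasureTheory.volume.restrict (Set.Icc 0 t)),
        μ s ≤ K * s ^ (-(1/a)) := by
      have hne : ∀ᵐ s : ℝ ∂MeasureTheory.volume, s ≠ 0 := by
        have : MeasureTheory.volume ({0} : Set ℝ) = 0 := Real.volume_singleton
        filter_upwards [MeasureTheory.measure_eq_zero_iff_ae_notMem.1 this] with s hs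
        simpa using hs
      filter_upwards [MeasureTheory.ae_restrict_mem measurableSet_Icc,
        MeasureTheory.ae_restrict_of_ae hne] with s hs hs0
      have hs' : 0 < s := lt_of_le_of_ne hs.1 (Ne.symm hs0)
      have hst : s ≤ t := hs.2
      have h1 : μ s ≤ M * Φinv (1/s) := hμle s hs'
      have h2 : Φinv (1/s) ≤ ((1/s)/(1/t)) ^ (1/a) * Φinv (1/t) :=
        inv_bound (1/s) (1/t) (by positivity) (by
          apply one_div_le_one_div_of_le hs' hst)
      have h3 : ((1/s)/(1/t)) ^ (1/a) = t ^ (1/a) * s ^ (-(1/a)) := by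
        have : (1/s)/(1/t) = t / s := by field_simp
        rw [this, Real.div_rpow ht.le hs'.le, Real.rpow_neg hs'.le, div_eq_mul_inv]
      calc μ s ≤ M * Φinv (1/s) := h1
      _ ≤ M * (((1/s)/(1/t)) ^ (1/a) * Φinv (1/t)) :=
          mul_le_mul_of_nonneg_left h2 hM0
      _ = K * s ^ (-(1/a)) := by rw [h3, hK]; ring
    have hint_le : (∫ s in (0:ℝ)..t, μ s) ≤ ∫ s in (0:ℝ)..t, K * s ^ (-(1/a)) :=
      intervalIntegral.integral_mono_ae_restrict ht.le (hμint t ht) hrint hboundae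
    have hint_val : (∫ s in (0:ℝ)..t, K * s ^ (-(1/a))) = K * (t ^ c / c) := by
      rw [intervalIntegral.integral_const_mul, integral_rpow (Or.inl (by
        linarith [div_lt_one ha0 |>.2 ha1] : (-1:ℝ) < -(1/a)))]
      have hec : -(1/a) + 1 = c := by rw [hc]; ring
      have h0 : (0:ℝ) ^ (-(1/a) + 1) = 0 := by
        apply Real.zero_rpow
        rw [hec]; exact hc0.ne'
      rw [h0, hec]; ring
    -- final real bound
    have hfinal : (1 / Φinv (1/t)) * ((1/t) * ∫ s in (0:ℝ)..t, μ s) ≤ c⁻¹ * M := by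
      have h4 : (∫ s in (0:ℝ)..t, μ s) ≤ K * (t ^ c / c) := by
        rw [← hint_val]; exact hint_le
      have htc : t ^ (1/a) * t ^ c = t := by
        rw [← Real.rpow_add ht]
        rw [show 1/a + c = 1 by rw [hc]; ring, Real.rpow_one]
      have h5 : K * (t ^ c / c) = c⁻¹ * M * Φinv (1/t) * t := by
        rw [hK]
        have h6 : M * Φinv (1/t) * t ^ (1/a) * (t ^ c / c)
            = c⁻¹ * (M * Φinv (1/t)) * (t ^ (1/a) * t ^ c) := by
          field_simp
        rw [h6, htc]; ring
      calc (1 / Φinv (1/t)) * ((1/t) * ∫ s in (0:ℝ)..t, μ s)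
          ≤ (1 / Φinv (1/t)) * ((1/t) * (c⁻¹ * M * Φinv (1/t) * t)) := by
            apply mul_le_mul_of_nonneg_left _ (by positivity)
            apply mul_le_mul_of_nonneg_left _ (by positivity)
            rw [← h5]; exact h4
      _ = c⁻¹ * M := by field_simp
    calc ENNReal.ofReal ((1 / Φinv (1/t)) * ((1/t) * ∫ s in (0:ℝ)..t, μ s))
        ≤ ENNReal.ofReal (c⁻¹ * M) := ENNReal.ofReal_le_ofReal hfinal
    _ = ENNReal.ofReal c⁻¹ * ENNReal.ofReal M :=
        ENNReal.ofReal_mul (by positivity)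
    _ = ENNReal.ofReal c⁻¹ * T := by rw [← hTM]
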